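/- Let $X_0$ be a smooth projective variety of dimension $d-1$ with $E$-polynomial $E(X_0;u,v)$, and let $X$ be the cone over $X_0$ with respect to an ample line bundle $L$ satisfying $L^{\otimes k} \cong K_{X_0}^{-l}$. Then the stringy E-function of $X$ computed from the blow-up resolution $Y = \mathbb{P}(\mathcal{O}_{X_0}\oplus L) \to X$ with discrepancy $a = k/l - 1$ is $E_{st}(X;u,v) = E(X_0;u,v)\Big(uv + \frac{uv-1}{(uv)^{k/l}-1}\Big) = \frac{(uv)^{k/l+1}-1}{(uv)^{k/l}-1}\, E(X_0;u,v)$; in particular its limit as $u,v \to 1$ equals $\frac{k+l}{k}\, e(X_0)$. -/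

import Mathlib

open Filter

/-- Stringy E-function of the cone over a smooth projective Fano `X₀` with
`L^⊗k ≅ K_{X₀}^{-l}`, computed from the `ℙ¹`-bundle resolution with discrepancy
`k/l - 1`: writing `P t` for `E(X₀;u,v)` as a function of `t = uv`,
`E_st = P(t)·(t + (t-1)/(t^{k/l}-1)) = (t^{k/l+1}-1)/(t^{k/l}-1)·P(t)`, and its
limit as `t → 1` is `(k+l)/k · e(X₀)` where `e(X₀) = P 1`. -/
theorem stmt6 (k l : ℕ) (hk : 0 < k) (hl : 0 < l)
    (P : ℝ → ℝ) (hP : ContinuousAt P 1) :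
    (∀ t : ℝ, 0 < t → t ≠ 1 →
      P t * (t + (t - 1) / (t ^ ((k : ℝ) / l) - 1))
        = ((t ^ ((k : ℝ) / l + 1) - 1) / (t ^ ((k : ℝ) / l) - 1)) * P t) ∧
    Tendsto (fun t : ℝ => P t * (t + (t - 1) / (t ^ ((k : ℝ) / l) - 1)))
      (nhdsWithin 1 (Set.Ioi 0 \ {1}))
      (nhds (((k : ℝ) + l) / k * P 1)) := by
  have hk' : (k : ℝ) ≠ 0 := Nat.cast_ne_zero.mpr hk.ne'
  have hl' : (l : ℝ) ≠ 0 := Nat.cast_ne_zero.mpr hl.ne'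
  set a : ℝ := (k : ℝ) / l with ha_def
  have ha : 0 < a := div_pos (by exact_mod_cast hk) (by exact_mod_cast hl)
  constructor
  · intro t ht ht1
    have hta : t ^ a ≠ 1 := by
      intro h
      have hlog : a * Real.log t = 0 := by
        rw [← Real.log_rpow ht, h, Real.log_one]
      have : Real.log t = 0 := by
        rcases mul_eq_zero.mp hlog with h' | h'
        · exact absurd h' ha.ne'
        · exact h'
      rcases Real.log_eq_zero.mp this with h' | h' | h' <;>
        [exact absurd h' ht.ne'; exact ht1 h'; linarith]
    have h1 : t ^ a - 1 ≠ 0 := sub_ne_zero.mpr hta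
    rw [Real.rpow_add_one ht.ne']
    field_simp
    ring
  · have hd : HasDerivAt (fun t : ℝ => t ^ a) a 1 := by
      have := Real.hasDerivAt_rpow_const (x := (1:ℝ)) (p := a) (Or.inl one_ne_zero)
      simpa using this
    have hslope : Tendsto (slope (fun t : ℝ => t ^ a) 1)
        (nhdsWithin 1 {(1:ℝ)}ᶜ) (nhds a) :=
      hasDerivAt_iff_tendsto_slope.mp hd
    have hinv : Tendsto (fun t : ℝ => (t - 1) / (t ^ a - 1))
        (nhdsWithin 1 {(1:ℝ)}ᶜ) (nhds a⁻¹) := by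
      have := hslope.inv₀ ha.ne'
      refine this.congr (fun t => ?_)
      simp [slope, Real.one_rpow, inv_div]
      ring
    have hmono : nhdsWithin (1:ℝ) (Set.Ioi 0 \ {1}) ≤ nhdsWithin 1 {(1:ℝ)}ᶜ :=
      nhdsWithin_mono 1 (fun x hx => hx.2)
    have hid : Tendsto (fun t : ℝ => t) (nhdsWithin (1:ℝ) (Set.Ioi 0 \ {1})) (nhds 1) :=
      tendsto_id.mono_left nhdsWithin_le_nhds
    have hPt : Tendsto P (nhdsWithin (1:ℝ) (Set.Ioi 0 \ {1})) (nhds (P 1)) :=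
      hP.tendsto.mono_left nhdsWithin_le_nhds
    have hmain : Tendsto (fun t : ℝ => P t * (t + (t - 1) / (t ^ a - 1)))
        (nhdsWithin (1:ℝ) (Set.Ioi 0 \ {1})) (nhds (P 1 * (1 + a⁻¹))) :=
      hPt.mul (hid.add ((hinv.mono_left hmono)))
    have hval : P 1 * (1 + a⁻¹) = ((k : ℝ) + l) / k * P 1 := by
      rw [ha_def]
      field_simp
    rwa [hval] at hmain
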